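/- Let P_n be the path on n ≥ 4 vertices, so that κ(P_n) = n − 1. For every real number k with 2 < k ≤ n − 1, dim_f^k(P_n) = 2 + (k − 2)·(n − 2)/(n − 3). -/

import Mathlib

open Finset

namespace FracDim

variable {V : Type*}

/-- `R{x,y}`: the set of vertices `z` with `d(x,z) ≠ d(y,z)`. -/
noncomputable def resSet [Fintype V] (G : SimpleGraph V) (x y : V) : Finset V :=
  Finset.univ.filter (fun z => G.dist x z ≠ G.dist y z)

/-- `κ(G) = min { |R{x,y}| : x ≠ y }`. -/
noncomputable def kappa [Fintype V] (G : SimpleGraph V) : ℕ :=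
  sInf {n : ℕ | ∃ x y : V, x ≠ y ∧ (resSet G x y).card = n}

/-- A `k`-resolving function: `g : V → [0,1]` with `g(R{x,y}) ≥ k` for all distinct `x, y`. -/
def IsKResolving [Fintype V] (G : SimpleGraph V) (k : ℝ) (g : V → ℝ) : Prop :=
  (∀ v, 0 ≤ g v ∧ g v ≤ 1) ∧
    ∀ x y : V, x ≠ y → k ≤ ∑ z ∈ resSet G x y, g z

/-- The fractional `k`-metric dimension of `G`. -/
noncomputable def fracKDim [Fintype V] (G : SimpleGraph V) (k : ℝ) : ℝ :=
  sInf {s : ℝ | ∃ g : V → ℝ, IsKResolving G k g ∧ s = ∑ v, g v}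

/-- The fractional metric dimension of `G`. -/
noncomputable def fracDim [Fintype V] (G : SimpleGraph V) : ℝ :=
  fracKDim G 1

end FracDim


open SimpleGraph FracDim

lemma path_walk_lb {n : ℕ} {u v : Fin n} (w : (pathGraph n).Walk u v) :
    ((u : ℤ) - (v : ℤ)).natAbs ≤ w.length := by
  induction w with
  | nil => simp
  | @cons a b c h p ih =>
    rw [pathGraph_adj] at h
    rw [Walk.length_cons]
    omega

lemma path_dist_le {n : ℕ} : ∀ (d : ℕ) (u v : Fin n), u.val + d = v.val →
    (pathGraph n).dist u v ≤ d := by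
  intro d
  induction d with
  | zero => intro u v h; have : u = v := Fin.ext (by omega); simp [this]
  | succ d ih =>
    intro u v h
    have hb : u.val + 1 < n := by omega
    set b : Fin n := ⟨u.val + 1, hb⟩ with hbdef
    have hadj : (pathGraph n).Adj u b := pathGraph_adj.mpr (Or.inl rfl)
    have h1 : (pathGraph n).dist u b ≤ 1 := dist_le (Walk.cons hadj Walk.nil)
    have h2 : (pathGraph n).dist b v ≤ d := ih b v (by simp [hbdef]; omega)
    have hconn : (pathGraph n).Connected := by
      have : Nonempty (Fin n) := ⟨u⟩
      exact ⟨pathGraph_preconnected n⟩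
    calc (pathGraph n).dist u v ≤ _ + _ := hconn.dist_triangle (v := b)
      _ ≤ d + 1 := by omega

lemma pathGraph_dist {n : ℕ} (u v : Fin n) :
    (pathGraph n).dist u v = ((u : ℤ) - (v : ℤ)).natAbs := by
  refine le_antisymm ?_ ?_
  · rcases le_total u.val v.val with h | h
    · have := path_dist_le (v.val - u.val) u v (by omega)
      omega
    · have := path_dist_le (u.val - v.val) v u (by omega)
      rw [dist_comm]
      omega
  · obtain ⟨p, hp⟩ := (pathGraph_preconnected n u v).exists_walk_length_eq_dist
    rw [← hp]
    exact path_walk_lb p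

lemma mem_resSet_path {n : ℕ} (x y z : Fin n) :
    z ∈ resSet (pathGraph n) x y ↔
      ((x : ℤ) - z).natAbs ≠ ((y : ℤ) - z).natAbs := by
  simp [resSet, pathGraph_dist]

lemma not_mem_resSet_path {n : ℕ} {x y z : Fin n} (hxy : x ≠ y)
    (hz : z ∉ resSet (pathGraph n) x y) :
    (x.val : ℤ) + y.val = 2 * z.val ∧ 0 < z.val ∧ z.val + 1 < n := by
  rw [mem_resSet_path, not_ne_iff] at hz
  have hne : x.val ≠ y.val := fun h => hxy (Fin.ext h)
  have hx := x.isLt; have hy := y.isLt; have hzl := z.isLt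
  omega

lemma compl_resSet_card {n : ℕ} {x y : Fin n} (hxy : x ≠ y) :
    (univ \ resSet (pathGraph n) x y).card ≤ 1 := by
  apply Finset.card_le_one.mpr
  intro a ha b hb
  simp only [Finset.mem_sdiff] at ha hb
  have h1 := not_mem_resSet_path hxy ha.2
  have h2 := not_mem_resSet_path hxy hb.2
  exact Fin.ext (by omega)

lemma resSet_card_ge {n : ℕ} {x y : Fin n} (hxy : x ≠ y) :
    n - 1 ≤ (resSet (pathGraph n) x y).card := by
  have h := compl_resSet_card hxy
  have h2 : (univ \ resSet (pathGraph n) x y).card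
      = n - (resSet (pathGraph n) x y).card := by
    rw [Finset.card_sdiff_of_subset (Finset.subset_univ _), Finset.card_univ, Fintype.card_fin]
  have h3 : (resSet (pathGraph n) x y).card ≤ n := by
    simpa using Finset.card_le_card (Finset.subset_univ (resSet (pathGraph n) x y))
  omega

lemma resSet_interior {n : ℕ} {z : Fin n} (h0 : 0 < z.val) (h1 : z.val + 1 < n) :
    resSet (pathGraph n) ⟨z.val - 1, by omega⟩ ⟨z.val + 1, h1⟩ = univ.erase z := by
  ext w
  simp only [Finset.mem_erase, Finset.mem_univ, and_true]
  rw [mem_resSet_path]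
  have hw := w.isLt
  constructor
  · intro h hwz
    subst hwz
    simp at h
    omega
  · intro hwz
    have : w.val ≠ z.val := fun h => hwz (Fin.ext h)
    simp only []
    omega

lemma kappa_path {n : ℕ} (hn : 4 ≤ n) : kappa (pathGraph n) = n - 1 := by
  have h0 : (0 : ℕ) < n := by omega
  set x : Fin n := ⟨0, by omega⟩
  set y : Fin n := ⟨2, by omega⟩
  set z : Fin n := ⟨1, by omega⟩
  have hxy : x ≠ y := by simp [x, y, Fin.ext_iff]
  have hcard : (resSet (pathGraph n) x y).card = n - 1 := by
    have hz : z ∉ resSet (pathGraph n) x y := by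
      rw [mem_resSet_path, not_ne_iff]
      simp [x, y, z]
    have hsub : univ \ resSet (pathGraph n) x y = {z} := by
      apply Finset.eq_singleton_iff_unique_mem.mpr
      refine ⟨Finset.mem_sdiff.mpr ⟨Finset.mem_univ _, hz⟩, ?_⟩
      intro w hw
      have h2 := not_mem_resSet_path hxy (Finset.mem_sdiff.mp hw).2
      exact Fin.ext (by simp [x, y, z] at h2 ⊢; omega)
    have := Finset.card_sdiff_of_subset (Finset.subset_univ (resSet (pathGraph n) x y))
    rw [hsub] at this
    simp only [Finset.card_singleton, Finset.card_univ, Fintype.card_fin] at this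
    have h3 : (resSet (pathGraph n) x y).card ≤ n := by
      simpa using Finset.card_le_card (Finset.subset_univ (resSet (pathGraph n) x y))
    omega
  apply le_antisymm
  · exact Nat.sInf_le ⟨x, y, hxy, hcard⟩
  · have hne : {m : ℕ | ∃ a b : Fin n, a ≠ b ∧ (resSet (pathGraph n) a b).card = m}.Nonempty :=
      ⟨n - 1, x, y, hxy, hcard⟩
    obtain ⟨a, b, hab, hm⟩ := Nat.sInf_mem hne
    rw [kappa, ← hm]
    exact resSet_card_ge hab

lemma path_resolving_lb {n : ℕ} (hn : 4 ≤ n) {k : ℝ} {g : Fin n → ℝ}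
    (hg : IsKResolving (pathGraph n) k g) :
    2 + (k - 2) * ((n : ℝ) - 2) / ((n : ℝ) - 3) ≤ ∑ v, g v := by
  obtain ⟨hg01, hres⟩ := hg
  have hN : (4 : ℝ) ≤ (n : ℝ) := by exact_mod_cast hn
  have hpos : (0 : ℝ) < (n : ℝ) - 3 := by linarith
  set S := ∑ v, g v with hS
  set z0 : Fin n := ⟨0, by omega⟩ with hz0
  set z1 : Fin n := ⟨n - 1, by omega⟩ with hz1
  have hz01 : z1 ≠ z0 := by simp [hz0, hz1, Fin.ext_iff]; omega
  set I : Finset (Fin n) := (univ.erase z0).erase z1 with hI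
  have hIcard : I.card = n - 2 := by
    rw [hI, Finset.card_erase_of_mem (Finset.mem_erase.mpr ⟨hz01, Finset.mem_univ _⟩),
      Finset.card_erase_of_mem (Finset.mem_univ _), Finset.card_univ, Fintype.card_fin]
    omega
  have hIsum : ∑ z ∈ I, g z = S - g z0 - g z1 := by
    rw [hI, Finset.sum_erase_eq_sub (Finset.mem_erase.mpr ⟨hz01, Finset.mem_univ _⟩),
      Finset.sum_erase_eq_sub (Finset.mem_univ _)]
  have hkey : ∀ z ∈ I, k + g z ≤ S := by
    intro z hz
    rw [hI, Finset.mem_erase, Finset.mem_erase] at hz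
    have hzv0 : z.val ≠ z0.val := fun h => hz.2.1 (Fin.ext h)
    have hzv1 : z.val ≠ z1.val := fun h => hz.1 (Fin.ext h)
    have hv0 : z0.val = 0 := rfl
    have hv1 : z1.val = n - 1 := rfl
    have hlt := z.isLt
    have h0 : 0 < z.val := by omega
    have h1 : z.val + 1 < n := by omega
    have hxy : (⟨z.val - 1, by omega⟩ : Fin n) ≠ ⟨z.val + 1, h1⟩ := by
      simp only [Ne, Fin.ext_iff]
      omega
    have := hres _ _ hxy
    rw [resSet_interior h0 h1, Finset.sum_erase_eq_sub (Finset.mem_univ z)] at this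
    linarith
  have hsumle : ∑ z ∈ I, (k + g z) ≤ ∑ z ∈ I, S := Finset.sum_le_sum hkey
  rw [Finset.sum_add_distrib, Finset.sum_const, Finset.sum_const, hIsum] at hsumle
  have hcast : ((I.card : ℝ)) = (n : ℝ) - 2 := by
    rw [hIcard]; push_cast [Nat.cast_sub (by omega : 2 ≤ n)]; ring
  rw [nsmul_eq_mul, nsmul_eq_mul, hcast] at hsumle
  have hb0 := hg01 z0
  have hb1 := hg01 z1
  have heq : 2 + (k - 2) * ((n : ℝ) - 2) / ((n : ℝ) - 3)
      = (((n : ℝ) - 2) * k - 2) / ((n : ℝ) - 3) := by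
    field_simp
    ring
  rw [heq, div_le_iff₀ hpos]
  nlinarith [hsumle, hb0.2, hb1.2]

lemma fracKDim_path {n : ℕ} (hn : 4 ≤ n) {k : ℝ} (h2 : 2 < k) (hk : k ≤ (n : ℝ) - 1) :
    fracKDim (pathGraph n) k = 2 + (k - 2) * ((n : ℝ) - 2) / ((n : ℝ) - 3) := by
  have hN : (4 : ℝ) ≤ (n : ℝ) := by exact_mod_cast hn
  have hpos : (0 : ℝ) < (n : ℝ) - 3 := by linarith
  set t : ℝ := (k - 2) / ((n : ℝ) - 3) with ht
  have ht0 : 0 ≤ t := div_nonneg (by linarith) (by linarith)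
  have ht1 : t ≤ 1 := by rw [ht, div_le_one hpos]; linarith
  set z0 : Fin n := ⟨0, by omega⟩ with hz0
  set z1 : Fin n := ⟨n - 1, by omega⟩ with hz1
  have hz01 : z0 ≠ z1 := by simp [hz0, hz1, Fin.ext_iff]; omega
  set g : Fin n → ℝ := fun v =>
    t + (if v = z0 then 1 - t else 0) + (if v = z1 then 1 - t else 0) with hg
  have hsum : ∑ v, g v = (n : ℝ) * t + 2 * (1 - t) := by
    rw [hg]
    simp only [Finset.sum_add_distrib, Finset.sum_const, Finset.sum_ite_eq',
      Finset.mem_univ, if_true, Finset.card_univ, Fintype.card_fin, nsmul_eq_mul]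
    ring
  have hkt : 2 + ((n : ℝ) - 3) * t = k := by
    rw [ht]; field_simp; ring
  have hSstar : (n : ℝ) * t + 2 * (1 - t) = 2 + (k - 2) * ((n : ℝ) - 2) / ((n : ℝ) - 3) := by
    rw [ht]; field_simp; ring
  have hres : IsKResolving (pathGraph n) k g := by
    constructor
    · intro v
      have hgv : g v = t ∨ g v = 1 := by
        simp only [hg]
        rcases eq_or_ne v z0 with h0 | h0 <;> rcases eq_or_ne v z1 with h1 | h1
        · exact absurd (h0.symm.trans h1) hz01
        · right; rw [if_pos h0, if_neg h1]; ring
        · right; rw [if_neg h0, if_pos h1]; ring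
        · left; rw [if_neg h0, if_neg h1]; ring
      rcases hgv with h | h <;> rw [h] <;> constructor <;> linarith
    · intro x y hxy
      have hsplit := Finset.sum_sdiff (Finset.subset_univ (resSet (pathGraph n) x y)) (f := g)
      have hC : ∑ w ∈ univ \ resSet (pathGraph n) x y, g w ≤ t := by
        have hconst : ∀ w ∈ univ \ resSet (pathGraph n) x y, g w = t := by
          intro w hw
          have h := not_mem_resSet_path hxy (Finset.mem_sdiff.mp hw).2
          have hw0 : w ≠ z0 := by simp [hz0, Fin.ext_iff]; omega
          have hw1 : w ≠ z1 := by simp [hz1, Fin.ext_iff]; omega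
          simp [hg, hw0, hw1]
        rw [Finset.sum_congr rfl hconst, Finset.sum_const, nsmul_eq_mul]
        have hcard : (univ \ resSet (pathGraph n) x y).card ≤ 1 := by
          apply Finset.card_le_one.mpr
          intro a ha b hb
          have h1 := not_mem_resSet_path hxy (Finset.mem_sdiff.mp ha).2
          have h2 := not_mem_resSet_path hxy (Finset.mem_sdiff.mp hb).2
          exact Fin.ext (by omega)
        calc ((univ \ resSet (pathGraph n) x y).card : ℝ) * t ≤ 1 * t := by
              apply mul_le_mul_of_nonneg_right _ ht0
              exact_mod_cast hcard
          _ = t := one_mul t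
      have : ∑ z ∈ resSet (pathGraph n) x y, g z
          = (∑ v, g v) - ∑ w ∈ univ \ resSet (pathGraph n) x y, g w := by linarith
      rw [this, hsum]
      linarith
  have hmem : (2 + (k - 2) * ((n : ℝ) - 2) / ((n : ℝ) - 3)) ∈
      {s : ℝ | ∃ g : Fin n → ℝ, IsKResolving (pathGraph n) k g ∧ s = ∑ v, g v} :=
    ⟨g, hres, by rw [hsum, hSstar]⟩
  have hlb : ∀ s ∈ {s : ℝ | ∃ g : Fin n → ℝ, IsKResolving (pathGraph n) k g ∧ s = ∑ v, g v},
      2 + (k - 2) * ((n : ℝ) - 2) / ((n : ℝ) - 3) ≤ s := by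
    rintro s ⟨g', hg', rfl⟩
    exact path_resolving_lb hn hg'
  exact le_antisymm (csInf_le ⟨_, hlb⟩ hmem) (le_csInf ⟨_, hmem⟩ hlb)

open FracDim in
/-- For the path `P_n` on `n ≥ 4` vertices, `κ(P_n) = n - 1`, and for every real `k`
with `2 < k ≤ n - 1`, `dim_f^k(P_n) = 2 + (k - 2)·(n - 2)/(n - 3)`. -/
theorem fracKDim_path_large_k (n : ℕ) (hn : 4 ≤ n) :
    kappa (SimpleGraph.pathGraph n) = n - 1 ∧
      (∀ k : ℝ, 2 < k → k ≤ (n : ℝ) - 1 →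
        fracKDim (SimpleGraph.pathGraph n) k
          = 2 + (k - 2) * ((n : ℝ) - 2) / ((n : ℝ) - 3)) := by
  exact ⟨kappa_path hn, fun k h2 hk => fracKDim_path hn h2 hk⟩
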